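/- arXiv:1203.5619 — 2 statements merged into one kernel-verified Lean document; each statement's English description precedes it below -/
import Mathlib

section
/- If f : ℍ → ℍ is H-differentiable at z⁰ ∈ ℍ with H-derivative d, then for every natural number n ≥ 1 the function z ↦ (f(z))^n is H-differentiable at z⁰ with H-derivative ∑_{j=0}^{n−1} (f(z⁰))^{n−1−j} · d · (f(z⁰))^j. -/
set_option maxHeartbeats 1000000


open scoped Quaternion
open Filter Topology

/-- A function `f : ℍ → ℍ` is H-differentiable at `z₀` with H-derivative `d` if there exist
sequences of quaternions `A, B` with `∑ ‖A k‖ * ‖B k‖ < ∞` such that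
`f (z₀ + h) - f z₀ = ∑' k, A k * h * B k + ω h` with `‖ω h‖ / ‖h‖ → 0` as `h → 0`,
and `d = ∑' k, A k * B k`. -/
def HDiffAt (f : ℍ[ℝ] → ℍ[ℝ]) (z₀ d : ℍ[ℝ]) : Prop :=
  ∃ A B : ℕ → ℍ[ℝ],
    (Summable fun k => ‖A k‖ * ‖B k‖) ∧
    Filter.Tendsto
      (fun h : ℍ[ℝ] => ‖f (z₀ + h) - f z₀ - ∑' k, A k * h * B k‖ / ‖h‖)
      (𝓝[≠] (0 : ℍ[ℝ])) (𝓝 0) ∧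
    d = ∑' k, A k * B k

private lemma hq_norm_eq (A B : ℕ → ℍ[ℝ]) (h : ℍ[ℝ]) :
    (fun k => ‖A k * h * B k‖) = fun k => ‖h‖ * (‖A k‖ * ‖B k‖) := by
  funext k; rw [norm_mul, norm_mul]; ring

private lemma hq_summable (A B : ℕ → ℍ[ℝ]) (hAB : Summable fun k => ‖A k‖ * ‖B k‖)
    (h : ℍ[ℝ]) : Summable fun k => A k * h * B k := by
  apply Summable.of_norm
  rw [hq_norm_eq]
  exact hAB.mul_left _

private lemma hq_bound (A B : ℕ → ℍ[ℝ]) (hAB : Summable fun k => ‖A k‖ * ‖B k‖)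
    (h : ℍ[ℝ]) : ‖∑' k, A k * h * B k‖ ≤ (∑' k, ‖A k‖ * ‖B k‖) * ‖h‖ := by
  calc ‖∑' k, A k * h * B k‖ ≤ ∑' k, ‖A k * h * B k‖ :=
        norm_tsum_le_tsum_norm (by rw [hq_norm_eq]; exact hAB.mul_left _)
    _ = ‖h‖ * ∑' k, ‖A k‖ * ‖B k‖ := by rw [hq_norm_eq]; exact tsum_mul_left
    _ = _ := mul_comm _ _

private lemma hDiffAt_mul {f g : ℍ[ℝ] → ℍ[ℝ]} {z₀ d e : ℍ[ℝ]}
    (hf : HDiffAt f z₀ d) (hg : HDiffAt g z₀ e) :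
    HDiffAt (fun z => f z * g z) z₀ (d * g z₀ + f z₀ * e) := by
  obtain ⟨A, B, hAB, hTf, hd⟩ := hf
  obtain ⟨P, Q, hPQ, hTg, he⟩ := hg
  set Cf : ℝ := ∑' k, ‖A k‖ * ‖B k‖ with hCf
  set Cg : ℝ := ∑' k, ‖P k‖ * ‖Q k‖ with hCg
  set E : ℕ → ℍ[ℝ] := fun k => if Even k then A (k / 2) else f z₀ * P (k / 2) with hE
  set F : ℕ → ℍ[ℝ] := fun k => if Even k then B (k / 2) * g z₀ else Q (k / 2) with hF
  have hEe : ∀ m, E (2 * m) = A m := by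
    intro m; simp only [hE]; rw [if_pos (even_two_mul m)]; congr 1; omega
  have hEo : ∀ m, E (2 * m + 1) = f z₀ * P m := by
    intro m
    have hne : ¬ Even (2 * m + 1) := by simp [Nat.even_add_one, Nat.even_mul]
    simp only [hE]; rw [if_neg hne]; congr 2; omega
  have hFe : ∀ m, F (2 * m) = B m * g z₀ := by
    intro m; simp only [hF]; rw [if_pos (even_two_mul m)]; congr 2; omega
  have hFo : ∀ m, F (2 * m + 1) = Q m := by
    intro m
    have hne : ¬ Even (2 * m + 1) := by simp [Nat.even_add_one, Nat.even_mul]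
    simp only [hF]; rw [if_neg hne]; congr 1; omega
  -- the tsum identity for every h
  have hsum : ∀ h : ℍ[ℝ], ∑' k, E k * h * F k
      = (∑' k, A k * h * B k) * g z₀ + f z₀ * ∑' k, P k * h * Q k := by
    intro h
    have heq1 : (fun m => E (2 * m) * h * F (2 * m))
        = fun m => A m * h * B m * g z₀ := by
      simp only [hEe, hFe, mul_assoc]
    have heq2 : (fun m => E (2 * m + 1) * h * F (2 * m + 1))
        = fun m => f z₀ * (P m * h * Q m) := by
      simp only [hEo, hFo, mul_assoc]
    have h1 : Summable fun m => E (2 * m) * h * F (2 * m) := by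
      rw [heq1]; exact (hq_summable A B hAB h).mul_right _
    have h2 : Summable fun m => E (2 * m + 1) * h * F (2 * m + 1) := by
      rw [heq2]; exact (hq_summable P Q hPQ h).mul_left _
    rw [← tsum_even_add_odd (f := fun k => E k * h * F k) h1 h2]
    congr 1
    · rw [heq1]; exact tsum_mul_right
    · rw [heq2]; exact tsum_mul_left
  refine ⟨E, F, ?_, ?_, ?_⟩
  · -- summability of norms
    apply Summable.even_add_odd (f := fun k => ‖E k‖ * ‖F k‖)
    · have : (fun m => ‖E (2 * m)‖ * ‖F (2 * m)‖)
          = fun m => ‖A m‖ * ‖B m‖ * ‖g z₀‖ := by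
        funext m; rw [hEe, hFe, norm_mul]; ring
      rw [this]; exact hAB.mul_right _
    · have : (fun m => ‖E (2 * m + 1)‖ * ‖F (2 * m + 1)‖)
          = fun m => ‖f z₀‖ * (‖P m‖ * ‖Q m‖) := by
        funext m; rw [hEo, hFo, norm_mul]; ring
      rw [this]; exact hPQ.mul_left _
  · -- tendsto
    have hkey : ∀ h : ℍ[ℝ],
        f (z₀ + h) * g (z₀ + h) - f z₀ * g z₀ - ∑' k, E k * h * F k
        = (f (z₀ + h) - f z₀ - ∑' k, A k * h * B k) * g z₀
          + f z₀ * (g (z₀ + h) - g z₀ - ∑' k, P k * h * Q k)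
          + (f (z₀ + h) - f z₀) * (g (z₀ + h) - g z₀) := by
      intro h; rw [hsum h]; noncomm_ring
    -- g (z₀ + h) → g z₀
    have hnormh : Tendsto (fun h : ℍ[ℝ] => ‖h‖) (𝓝[≠] (0 : ℍ[ℝ])) (𝓝 0) := by
      simpa using (continuous_norm.tendsto (0 : ℍ[ℝ])).mono_left nhdsWithin_le_nhds
    have hG : Tendsto (fun h : ℍ[ℝ] => ‖g (z₀ + h) - g z₀‖) (𝓝[≠] (0 : ℍ[ℝ])) (𝓝 0) := by
      apply squeeze_zero' (Filter.Eventually.of_forall fun h => norm_nonneg _)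
        (g := fun h => ‖h‖ * (Cg + ‖g (z₀ + h) - g z₀ - ∑' k, P k * h * Q k‖ / ‖h‖))
      · filter_upwards [self_mem_nhdsWithin] with h hh
        have hne : h ≠ 0 := hh
        have hpos : (0 : ℝ) < ‖h‖ := norm_pos_iff.mpr hne
        calc ‖g (z₀ + h) - g z₀‖
            = ‖(∑' k, P k * h * Q k) + (g (z₀ + h) - g z₀ - ∑' k, P k * h * Q k)‖ := by
              congr 1; abel
          _ ≤ ‖∑' k, P k * h * Q k‖ + ‖g (z₀ + h) - g z₀ - ∑' k, P k * h * Q k‖ :=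
              norm_add_le _ _
          _ ≤ Cg * ‖h‖ + ‖g (z₀ + h) - g z₀ - ∑' k, P k * h * Q k‖ :=
              add_le_add_left (hq_bound P Q hPQ h) _
          _ = ‖h‖ * (Cg + ‖g (z₀ + h) - g z₀ - ∑' k, P k * h * Q k‖ / ‖h‖) := by
              field_simp
      · have h4 : Tendsto (fun h : ℍ[ℝ] =>
            ‖h‖ * (Cg + ‖g (z₀ + h) - g z₀ - ∑' k, P k * h * Q k‖ / ‖h‖))
            (𝓝[≠] (0 : ℍ[ℝ])) (𝓝 (0 * (Cg + 0))) := hnormh.mul (tendsto_const_nhds.add hTg)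
        simpa using h4
    -- main squeeze
    apply squeeze_zero' (Filter.Eventually.of_forall fun h =>
        div_nonneg (norm_nonneg _) (norm_nonneg _))
      (g := fun h => ‖f (z₀ + h) - f z₀ - ∑' k, A k * h * B k‖ / ‖h‖ * ‖g z₀‖
        + ‖f z₀‖ * (‖g (z₀ + h) - g z₀ - ∑' k, P k * h * Q k‖ / ‖h‖)
        + (Cf + ‖f (z₀ + h) - f z₀ - ∑' k, A k * h * B k‖ / ‖h‖) * ‖g (z₀ + h) - g z₀‖)
    · filter_upwards [self_mem_nhdsWithin] with h hh
      have hne : h ≠ 0 := hh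
      have hpos : (0 : ℝ) < ‖h‖ := norm_pos_iff.mpr hne
      rw [div_le_iff₀ hpos]
      have hΔf : ‖f (z₀ + h) - f z₀‖
          ≤ Cf * ‖h‖ + ‖f (z₀ + h) - f z₀ - ∑' k, A k * h * B k‖ := by
        calc ‖f (z₀ + h) - f z₀‖
            = ‖(∑' k, A k * h * B k) + (f (z₀ + h) - f z₀ - ∑' k, A k * h * B k)‖ := by
              congr 1; abel
          _ ≤ ‖∑' k, A k * h * B k‖ + ‖f (z₀ + h) - f z₀ - ∑' k, A k * h * B k‖ :=
              norm_add_le _ _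
          _ ≤ _ := add_le_add_left (hq_bound A B hAB h) _
      calc ‖(fun z => f z * g z) (z₀ + h) - f z₀ * g z₀ - ∑' k, E k * h * F k‖
          = ‖(f (z₀ + h) - f z₀ - ∑' k, A k * h * B k) * g z₀
              + f z₀ * (g (z₀ + h) - g z₀ - ∑' k, P k * h * Q k)
              + (f (z₀ + h) - f z₀) * (g (z₀ + h) - g z₀)‖ := by
            simp only []; rw [hkey h]
        _ ≤ ‖f (z₀ + h) - f z₀ - ∑' k, A k * h * B k‖ * ‖g z₀‖
              + ‖f z₀‖ * ‖g (z₀ + h) - g z₀ - ∑' k, P k * h * Q k‖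
              + ‖f (z₀ + h) - f z₀‖ * ‖g (z₀ + h) - g z₀‖ := by
            refine le_trans (norm_add_le _ _) ?_
            gcongr
            · refine le_trans (norm_add_le _ _) ?_
              rw [norm_mul, norm_mul]
            · rw [norm_mul]
        _ ≤ ‖f (z₀ + h) - f z₀ - ∑' k, A k * h * B k‖ * ‖g z₀‖
              + ‖f z₀‖ * ‖g (z₀ + h) - g z₀ - ∑' k, P k * h * Q k‖
              + (Cf * ‖h‖ + ‖f (z₀ + h) - f z₀ - ∑' k, A k * h * B k‖)
                * ‖g (z₀ + h) - g z₀‖ := by gcongr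
        _ = (‖f (z₀ + h) - f z₀ - ∑' k, A k * h * B k‖ / ‖h‖ * ‖g z₀‖
              + ‖f z₀‖ * (‖g (z₀ + h) - g z₀ - ∑' k, P k * h * Q k‖ / ‖h‖)
              + (Cf + ‖f (z₀ + h) - f z₀ - ∑' k, A k * h * B k‖ / ‖h‖)
                * ‖g (z₀ + h) - g z₀‖) * ‖h‖ := by
            field_simp
    · have h1 : Tendsto (fun h : ℍ[ℝ] =>
          ‖f (z₀ + h) - f z₀ - ∑' k, A k * h * B k‖ / ‖h‖ * ‖g z₀‖)
          (𝓝[≠] (0 : ℍ[ℝ])) (𝓝 (0 * ‖g z₀‖)) := hTf.mul_const _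
      have h2 : Tendsto (fun h : ℍ[ℝ] =>
          ‖f z₀‖ * (‖g (z₀ + h) - g z₀ - ∑' k, P k * h * Q k‖ / ‖h‖))
          (𝓝[≠] (0 : ℍ[ℝ])) (𝓝 (‖f z₀‖ * 0)) := hTg.const_mul _
      have h3 : Tendsto (fun h : ℍ[ℝ] =>
          (Cf + ‖f (z₀ + h) - f z₀ - ∑' k, A k * h * B k‖ / ‖h‖) * ‖g (z₀ + h) - g z₀‖)
          (𝓝[≠] (0 : ℍ[ℝ])) (𝓝 ((Cf + 0) * 0)) := (tendsto_const_nhds.add hTf).mul hG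
      simpa using (h1.add h2).add h3
  · -- value of the derivative
    have := hsum 1
    simp only [mul_one] at this
    rw [this, hd, he]

/-- Power rule for H-derivatives of `f^n`. -/
theorem hDiffAt_pow_comp (f : ℍ[ℝ] → ℍ[ℝ]) (z₀ d : ℍ[ℝ]) (hf : HDiffAt f z₀ d)
    (n : ℕ) (hn : 1 ≤ n) :
    HDiffAt (fun z => f z ^ n) z₀
      (∑ j ∈ Finset.range n, f z₀ ^ (n - 1 - j) * d * f z₀ ^ j) := by
  induction n, hn using Nat.le_induction with
  | base => simpa using hf
  | succ m hm ih =>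
    have H := hDiffAt_mul ih hf
    have hfun : (fun z => f z ^ (m + 1)) = fun z => f z ^ m * f z := by
      funext z; rw [pow_succ]
    have hder : (∑ j ∈ Finset.range (m + 1), f z₀ ^ (m + 1 - 1 - j) * d * f z₀ ^ j)
        = (∑ j ∈ Finset.range m, f z₀ ^ (m - 1 - j) * d * f z₀ ^ j) * f z₀
          + f z₀ ^ m * d := by
      rw [Finset.sum_range_succ', Finset.sum_mul]
      congr 1
      · refine Finset.sum_congr rfl fun j hj => ?_
        have h1 : m + 1 - 1 - (j + 1) = m - 1 - j := by omega
        rw [h1, pow_succ, ← mul_assoc]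
      · simp
    rw [hfun, hder]
    exact H
end

section
/- Let f : ℍ → ℍ be H-differentiable at z⁰ ∈ ℍ with H-derivative d₁ and φ : ℍ → ℍ be H-differentiable at z⁰ with H-derivative d₂, with φ(z) ≠ 0 for all z in some neighborhood of z⁰. Then the function z ↦ (φ(z))⁻¹ · f(z) is H-differentiable at z⁰ with H-derivative −(φ(z⁰))⁻¹ · d₂ · (φ(z⁰))⁻¹ · f(z⁰) + (φ(z⁰))⁻¹ · d₁. -/
open scoped Quaternion
open Filter Topology

noncomputable section HAux

/-- The continuous linear map `h ↦ ∑' k, A k * h * B k`. -/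
def hClM (A B : ℕ → ℍ[ℝ]) : ℍ[ℝ] →L[ℝ] ℍ[ℝ] :=
  ∑' k, ContinuousLinearMap.mulLeftRight ℝ ℍ[ℝ] (A k) (B k)

lemma hClM_summable {A B : ℕ → ℍ[ℝ]} (hs : Summable fun k => ‖A k‖ * ‖B k‖) :
    Summable fun k => ContinuousLinearMap.mulLeftRight ℝ ℍ[ℝ] (A k) (B k) :=
  Summable.of_norm_bounded hs fun k =>
    ContinuousLinearMap.opNorm_mulLeftRight_apply_apply_le ℝ ℍ[ℝ] _ _

lemma hterm_summable {A B : ℕ → ℍ[ℝ]} (hs : Summable fun k => ‖A k‖ * ‖B k‖) (h : ℍ[ℝ]) :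
    Summable fun k => A k * h * B k := by
  refine Summable.of_norm_bounded (hs.mul_right ‖h‖) fun k => ?_
  rw [norm_mul, norm_mul]
  ring_nf
  exact le_of_eq (by ring)

lemma hClM_apply {A B : ℕ → ℍ[ℝ]} (hs : Summable fun k => ‖A k‖ * ‖B k‖) (h : ℍ[ℝ]) :
    hClM A B h = ∑' k, A k * h * B k := by
  have := (ContinuousLinearMap.apply ℝ ℍ[ℝ] h).map_tsum (hClM_summable hs)
  simpa [hClM, ContinuousLinearMap.mulLeftRight_apply] using this

lemma key_iff {A B : ℕ → ℍ[ℝ]} (hs : Summable fun k => ‖A k‖ * ‖B k‖)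
    (f : ℍ[ℝ] → ℍ[ℝ]) (z₀ : ℍ[ℝ]) :
    Filter.Tendsto
      (fun h : ℍ[ℝ] => ‖f (z₀ + h) - f z₀ - ∑' k, A k * h * B k‖ / ‖h‖)
      (𝓝[≠] (0 : ℍ[ℝ])) (𝓝 0)
    ↔ HasFDerivAt f (hClM A B) z₀ := by
  have heq : ∀ h : ℍ[ℝ], f (z₀ + h) - f z₀ - hClM A B h
      = f (z₀ + h) - f z₀ - ∑' k, A k * h * B k := fun h => by rw [hClM_apply hs]
  have hfun : (fun x : ℍ[ℝ] => ‖(f (z₀ + x) - f z₀ - hClM A B x) / x‖)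
      = fun x : ℍ[ℝ] => ‖f (z₀ + x) - f z₀ - ∑' k, A k * x * B k‖ / ‖x‖ := by
    funext x
    rw [div_eq_mul_inv, norm_mul, norm_inv, heq, div_eq_mul_inv]
  have h2 : Filter.Tendsto (fun x => (f (z₀ + x) - f z₀ - hClM A B x) / x)
        (𝓝 (0 : ℍ[ℝ])) (𝓝 0)
      ↔ Filter.Tendsto (fun x : ℍ[ℝ] => ‖f (z₀ + x) - f z₀ - ∑' k, A k * x * B k‖ / ‖x‖)
        (𝓝 (0 : ℍ[ℝ])) (𝓝 0) :=
    tendsto_zero_iff_norm_tendsto_zero.trans (by rw [hfun])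
  rw [hasFDerivAt_iff_isLittleO_nhds_zero,
    Asymptotics.isLittleO_iff_tendsto (fun x hx => by rw [heq]; simp [hx]), h2]
  constructor
  · intro ht
    rw [← nhdsNE_sup_pure (0 : ℍ[ℝ]), Filter.tendsto_sup]
    refine ⟨ht, Filter.tendsto_pure_left.mpr fun s hs' => ?_⟩
    simpa using mem_of_mem_nhds hs'
  · exact fun h => h.mono_left nhdsWithin_le_nhds

end HAux

set_option maxHeartbeats 1000000 in
/-- Left-quotient rule for H-derivatives. -/
theorem hDiffAt_inv_mul (f φ : ℍ[ℝ] → ℍ[ℝ]) (z₀ d₁ d₂ : ℍ[ℝ])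
    (hf : HDiffAt f z₀ d₁) (hφ : HDiffAt φ z₀ d₂) (hne : ∀ᶠ z in 𝓝 z₀, φ z ≠ 0) :
    HDiffAt (fun z => (φ z)⁻¹ * f z) z₀
      (-((φ z₀)⁻¹ * d₂ * (φ z₀)⁻¹ * f z₀) + (φ z₀)⁻¹ * d₁) := by
  obtain ⟨A₁, B₁, hs₁, ht₁, hd₁⟩ := hf
  obtain ⟨A₂, B₂, hs₂, ht₂, hd₂⟩ := hφ
  have hφ0 : φ z₀ ≠ 0 := hne.self_of_nhds
  set c : ℍ[ℝ] := (φ z₀)⁻¹ with hc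
  have hF : HasFDerivAt f (hClM A₁ B₁) z₀ := (key_iff hs₁ f z₀).mp ht₁
  have hG : HasFDerivAt φ (hClM A₂ B₂) z₀ := (key_iff hs₂ φ z₀).mp ht₂
  have hinv : HasFDerivAt (fun z => (φ z)⁻¹)
      ((-ContinuousLinearMap.mulLeftRight ℝ ℍ[ℝ] c c).comp (hClM A₂ B₂)) z₀ := by
    have := (hasFDerivAt_inv' (𝕜 := ℝ) hφ0).comp z₀ hG
    exact this
  have hmul : HasFDerivAt (fun z => (φ z)⁻¹ * f z)
      ((φ z₀)⁻¹ • hClM A₁ B₁ +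
        ((-ContinuousLinearMap.mulLeftRight ℝ ℍ[ℝ] c c).comp (hClM A₂ B₂)).smulRight
          (f z₀)) z₀ := hinv.mul' hF
  -- interleaved sequences
  set A : ℕ → ℍ[ℝ] := fun k => if k % 2 = 0 then c * A₁ (k / 2) else -(c * A₂ (k / 2)) with hA
  set B : ℕ → ℍ[ℝ] := fun k => if k % 2 = 0 then B₁ (k / 2) else B₂ (k / 2) * (c * f z₀) with hB
  have hAe : ∀ j, A (2 * j) = c * A₁ j := fun j => by
    have h1 : (2 * j) % 2 = 0 := by omega
    have h2 : (2 * j) / 2 = j := by omega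
    simp [hA, h1, h2]
  have hBe : ∀ j, B (2 * j) = B₁ j := fun j => by
    have h1 : (2 * j) % 2 = 0 := by omega
    have h2 : (2 * j) / 2 = j := by omega
    simp [hB, h1, h2]
  have hAo : ∀ j, A (2 * j + 1) = -(c * A₂ j) := fun j => by
    have h1 : (2 * j + 1) % 2 = 1 := by omega
    have h2 : (2 * j + 1) / 2 = j := by omega
    simp [hA, h1, h2]
  have hBo : ∀ j, B (2 * j + 1) = B₂ j * (c * f z₀) := fun j => by
    have h1 : (2 * j + 1) % 2 = 1 := by omega
    have h2 : (2 * j + 1) / 2 = j := by omega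
    simp [hB, h1, h2]
  have hsum : Summable fun k => ‖A k‖ * ‖B k‖ := by
    apply Summable.even_add_odd
    · have : (fun j => ‖A (2 * j)‖ * ‖B (2 * j)‖)
          = fun j => ‖c‖ * (‖A₁ j‖ * ‖B₁ j‖) := by
        funext j; rw [hAe, hBe, norm_mul]; ring
      rw [this]; exact hs₁.mul_left _
    · have : (fun j => ‖A (2 * j + 1)‖ * ‖B (2 * j + 1)‖)
          = fun j => (‖c‖ * (‖c‖ * ‖f z₀‖)) * (‖A₂ j‖ * ‖B₂ j‖) := by
        funext j; rw [hAo, hBo, norm_neg, norm_mul, norm_mul, norm_mul]; ring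
      rw [this]; exact hs₂.mul_left _
  -- the CLM identity
  have hLeq : hClM A B = (φ z₀)⁻¹ • hClM A₁ B₁ +
      ((-ContinuousLinearMap.mulLeftRight ℝ ℍ[ℝ] c c).comp (hClM A₂ B₂)).smulRight
        (f z₀) := by
    refine ContinuousLinearMap.ext fun h => ?_
    have heq1 : (fun j => A (2 * j) * h * B (2 * j))
        = fun j => c * (A₁ j * h * B₁ j) := by
      funext j; rw [hAe, hBe, mul_assoc, mul_assoc, mul_assoc]
    have heq2 : (fun j => A (2 * j + 1) * h * B (2 * j + 1))
        = fun j => -c * ((A₂ j * h * B₂ j) * (c * f z₀)) := by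
      funext j; rw [hAo, hBo]
      simp only [neg_mul, mul_assoc]
    have he : Summable fun j => A (2 * j) * h * B (2 * j) := by
      rw [heq1]; exact (hterm_summable hs₁ h).mul_left c
    have ho : Summable fun j => A (2 * j + 1) * h * B (2 * j + 1) := by
      rw [heq2]; exact (((hterm_summable hs₂ h).mul_right (c * f z₀))).mul_left (-c)
    have hsplit := tsum_even_add_odd (f := fun k => A k * h * B k) he ho
    have heven : ∑' j, A (2 * j) * h * B (2 * j) = c * hClM A₁ B₁ h := by
      rw [heq1, (hterm_summable hs₁ h).tsum_mul_left, hClM_apply hs₁]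
    have hodd : ∑' j, A (2 * j + 1) * h * B (2 * j + 1)
        = -c * (hClM A₂ B₂ h * (c * f z₀)) := by
      rw [heq2, (((hterm_summable hs₂ h).mul_right (c * f z₀))).tsum_mul_left,
        ((hterm_summable hs₂ h)).tsum_mul_right, hClM_apply hs₂]
    rw [hClM_apply hsum, ← hsplit, heven, hodd]
    simp only [ContinuousLinearMap.add_apply, ContinuousLinearMap.smul_apply,
      ContinuousLinearMap.smulRight_apply, ContinuousLinearMap.comp_apply,
      ContinuousLinearMap.neg_apply, ContinuousLinearMap.mulLeftRight_apply,
      smul_eq_mul, neg_mul, mul_assoc, ← hc]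
  have hT : HasFDerivAt (fun z => (φ z)⁻¹ * f z) (hClM A B) z₀ := by
    rw [hLeq]; exact hmul
  have htend := (key_iff hsum (fun z => (φ z)⁻¹ * f z) z₀).mpr hT
  refine ⟨A, B, hsum, htend, ?_⟩
  -- value of the derivative
  have hs₁' : Summable fun j => A₁ j * B₁ j := by
    refine Summable.of_norm_bounded hs₁ fun k => ?_
    rw [norm_mul]
  have hs₂' : Summable fun j => A₂ j * B₂ j := by
    refine Summable.of_norm_bounded hs₂ fun k => ?_
    rw [norm_mul]
  have heq1 : (fun j => A (2 * j) * B (2 * j)) = fun j => c * (A₁ j * B₁ j) := by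
    funext j; rw [hAe, hBe, mul_assoc]
  have heq2 : (fun j => A (2 * j + 1) * B (2 * j + 1))
      = fun j => -c * ((A₂ j * B₂ j) * (c * f z₀)) := by
    funext j; rw [hAo, hBo]
    simp only [neg_mul, mul_assoc]
  have he : Summable fun j => A (2 * j) * B (2 * j) := by
    rw [heq1]; exact hs₁'.mul_left c
  have ho : Summable fun j => A (2 * j + 1) * B (2 * j + 1) := by
    rw [heq2]; exact (hs₂'.mul_right (c * f z₀)).mul_left (-c)
  have hsplit := tsum_even_add_odd (f := fun k => A k * B k) he ho
  have heven : ∑' j, A (2 * j) * B (2 * j) = c * d₁ := by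
    rw [heq1, hs₁'.tsum_mul_left, ← hd₁]
  have hodd : ∑' j, A (2 * j + 1) * B (2 * j + 1) = -c * (d₂ * (c * f z₀)) := by
    rw [heq2, (hs₂'.mul_right (c * f z₀)).tsum_mul_left, hs₂'.tsum_mul_right, ← hd₂]
  rw [← hsplit, heven, hodd]
  simp only [neg_mul, mul_assoc]
  exact add_comm _ _
end
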